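/- The set of co-ancestral X-clusters of G forms a hierarchy: if C₁ and C₂ are co-ancestral X-clusters then C₁ ∩ C₂ ∈ {∅, C₁, C₂}. -/

import Mathlib

open Relation

variable {V : Type*}

/-- `u ⪯ v` : the reflexive–transitive closure of the arc relation `E`. -/
def preceq (E : V → V → Prop) : V → V → Prop := Relation.ReflTransGen E

/-- `u ≺ v` : `u ⪯ v` and `u ≠ v`. -/
def precLT (E : V → V → Prop) (u v : V) : Prop := preceq E u v ∧ u ≠ v

/-- the set of common ancestors of `a` and `b`. -/
def ca (E : V → V → Prop) (a b : V) : Set V := {v | preceq E v a ∧ preceq E v b}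

/-- the set of most recent common ancestors of `a` and `b`:
the maximal elements of `ca E a b` with respect to `⪯`. -/
def mrca (E : V → V → Prop) (a b : V) : Set V :=
  {v | v ∈ ca E a b ∧ ∀ w ∈ ca E a b, preceq E v w → v = w}

/-- the set of descendants of `v` lying in `X`. -/
def desc (E : V → V → Prop) (X : Set V) (v : V) : Set V := {x | x ∈ X ∧ preceq E v x}

/-- `D(=C)` : the vertices whose set of descendants in `X` is exactly `C`. -/
def Deq (E : V → V → Prop) (X C : Set V) : Set V := {v | desc E X v = C}

/-- `D(⊆C)` : the vertices all of whose descendants in `X` lie in `C`. -/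
def Dsub (E : V → V → Prop) (X C : Set V) : Set V := {v | desc E X v ⊆ C}

/-- `S` separates `A` from `B`: every path in the underlying undirected graph of
`E` from an element of `A` to an element of `B` passes through some element of `S`. -/
def Separates (E : V → V → Prop) (S A B : Set V) : Prop :=
  ∀ x ∈ A, ∀ y ∈ B, x ∉ S →
    ¬ Relation.ReflTransGen (fun u v => (E u v ∨ E v u) ∧ v ∉ S) x y

/-- `C` is a tight `X`-cluster: it is a nonempty subset of `X` such that
`D(=C)` separates `C` from `X − C`. -/
def TightCluster (E : V → V → Prop) (X C : Set V) : Prop :=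
  C.Nonempty ∧ C ⊆ X ∧ Separates E (Deq E X C) C (X \ C)

/-- adjacency in the cousinship graph `Γ(C)`. -/
def cousinAdj (E : V → V → Prop) (X C : Set V) (x y : V) : Prop :=
  x ≠ y ∧ x ∈ C ∧ y ∈ C ∧
    ∃ v ∈ Dsub E X C, x ∈ desc E X v ∧ y ∈ desc E X v

/-- `C` is a strict `X`-cluster. -/
def StrictCluster (E : V → V → Prop) (X C : Set V) : Prop :=
  C ⊆ X ∧
  (∀ v : V, (C ∩ desc E X v).Nonempty → C ⊆ desc E X v ∨ desc E X v ⊆ C) ∧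
  (∀ x ∈ C, ∀ y ∈ C, Relation.ReflTransGen (cousinAdj E X C) x y)

/-- the relation `ab‖c`. -/
def relPar (E : V → V → Prop) (a b c : V) : Prop :=
  (ca E a b).Nonempty ∧ ∀ v ∈ mrca E a b,
    (∃ v' ∈ mrca E a c, precLT E v' v) ∧ (∃ v'' ∈ mrca E b c, precLT E v'' v)

/-- the relation `ab|c`. -/
def relBar (E : V → V → Prop) (a b c : V) : Prop :=
  (ca E a b).Nonempty ∧ ∀ v ∈ mrca E a b,
    ∃ v' ∈ mrca E a c ∪ mrca E b c, precLT E v' v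

/-- the relation `ab ⊥ c`. -/
def relPerp (E : V → V → Prop) (a b c : V) : Prop :=
  (ca E a c).Nonempty ∧ (ca E b c).Nonempty ∧
  ∀ v ∈ mrca E a c, ∀ v' ∈ mrca E b c,
    ∃ u ∈ mrca E a b, ∃ u' ∈ mrca E a b, precLT E v u ∧ precLT E v' u'

/-- `C` is an ancestral `X`-cluster. -/
def AncestralCluster (E : V → V → Prop) (X C : Set V) : Prop :=
  C ⊆ X ∧ ∀ x ∈ C, ∀ x' ∈ C, ∀ y ∈ X \ C, relPar E x x' y

/-- `C` is a relaxed ancestral `X`-cluster. -/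
def RelaxedAncestralCluster (E : V → V → Prop) (X C : Set V) : Prop :=
  C ⊆ X ∧ ∀ x ∈ C, ∀ x' ∈ C, ∀ y ∈ X \ C, relBar E x x' y

/-- `C` is a co-ancestral `X`-cluster. -/
def CoAncestralCluster (E : V → V → Prop) (X C : Set V) : Prop :=
  C ⊆ X ∧ ∀ x ∈ C, ∀ x' ∈ C, ∀ y ∈ X \ C, relPerp E x x' y

/-- `C` is an Apresjan `X`-cluster relative to `T`. -/
def ApresjanCluster (E : V → V → Prop) (X : Set V) (T : V → ℝ) (C : Set V) : Prop :=
  C ⊆ X ∧ ∃ t : ℝ,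
    (∀ x ∈ C, ∀ y ∈ C, ∃ v : V, preceq E v x ∧ preceq E v y ∧ t ≤ T v) ∧
    (∀ x ∈ C, ∀ y ∈ X \ C, ∀ v : V, preceq E v x → preceq E v y → T v < t)

/-- `C` is a strong Apresjan `X`-cluster relative to `T`. -/
def StrongApresjanCluster (E : V → V → Prop) (X : Set V) (T : V → ℝ) (C : Set V) : Prop :=
  C ⊆ X ∧ ∃ t : ℝ,
    (∀ x ∈ C, ∀ y ∈ C, ∀ v ∈ mrca E x y, t ≤ T v) ∧
    (∀ x ∈ C, ∀ y ∈ X \ C, ∀ v : V, preceq E v x → preceq E v y → T v < t)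

lemma preceq_antisymm {E : V → V → Prop} (hacyc : Irreflexive (Relation.TransGen E))
    {u v : V} (huv : preceq E u v) (hvu : preceq E v u) : u = v := by
  rcases (Relation.reflTransGen_iff_eq_or_transGen.mp huv) with h | h
  · exact h.symm
  rcases (Relation.reflTransGen_iff_eq_or_transGen.mp hvu) with h' | h'
  · exact h'
  exact absurd (h.trans h') (hacyc u)

lemma ca_comm (E : V → V → Prop) (a b : V) : ca E a b = ca E b a := by
  ext v; exact and_comm

lemma mrca_comm (E : V → V → Prop) (a b : V) : mrca E a b = mrca E b a := by
  unfold mrca; rw [ca_comm]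

lemma exists_mrca [Fintype V] (E : V → V → Prop)
    (hacyc : Irreflexive (Relation.TransGen E)) {a b : V}
    (h : (ca E a b).Nonempty) : (mrca E a b).Nonempty := by
  classical
  letI : PartialOrder V :=
    { le := preceq E
      lt := fun u v => preceq E u v ∧ ¬ preceq E v u
      le_refl := fun _ => Relation.ReflTransGen.refl
      le_trans := fun _ _ _ h1 h2 => Relation.ReflTransGen.trans h1 h2
      lt_iff_le_not_ge := fun _ _ => Iff.rfl
      le_antisymm := fun _ _ h1 h2 => preceq_antisymm hacyc h1 h2 }
  obtain ⟨m, hmS, hmax⟩ := Finset.exists_maximal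
    (by simpa [Set.toFinset_nonempty] using h : (ca E a b).toFinset.Nonempty)
  rw [Set.mem_toFinset] at hmS
  refine ⟨m, hmS, fun w hw hmw => ?_⟩
  by_contra hne
  have : ¬ preceq E w m := fun hwm => hne (preceq_antisymm hacyc hmw hwm)
  exact this (hmax (Set.mem_toFinset.mpr hw) hmw)

lemma precLT_trans' {E : V → V → Prop} (hacyc : Irreflexive (Relation.TransGen E))
    {u v w : V} (h1 : precLT E u v) (h2 : precLT E v w) : precLT E u w := by
  refine ⟨h1.1.trans h2.1, fun he => ?_⟩
  subst he
  exact h1.2 (preceq_antisymm hacyc h1.1 h2.1)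

/-- The set of co-ancestral X-clusters of G forms a hierarchy. -/
theorem coancestral_clusters_hierarchy [Fintype V] (E : V → V → Prop) (X : Set V)
    (hacyc : Irreflexive (Relation.TransGen E))
    (C₁ C₂ : Set V) (h1 : CoAncestralCluster E X C₁) (h2 : CoAncestralCluster E X C₂) :
    C₁ ∩ C₂ = ∅ ∨ C₁ ∩ C₂ = C₁ ∨ C₁ ∩ C₂ = C₂ := by
  by_contra hcon
  push_neg at hcon
  obtain ⟨hne, hn1, hn2⟩ := hcon
  -- get x ∈ C₁ ∩ C₂, a ∈ C₁ \ C₂, b ∈ C₂ \ C₁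
  obtain ⟨x, hx1, hx2⟩ := hne
  have ha : ∃ a, a ∈ C₁ ∧ a ∉ C₂ := by
    by_contra h
    push_neg at h
    exact hn1 (Set.ext fun v => ⟨fun hv => hv.1, fun hv => ⟨hv, h v hv⟩⟩)
  have hb : ∃ b, b ∈ C₂ ∧ b ∉ C₁ := by
    by_contra h
    push_neg at h
    exact hn2 (Set.ext fun v => ⟨fun hv => hv.2, fun hv => ⟨h v hv, hv⟩⟩)
  obtain ⟨a, haC1, haC2⟩ := ha
  obtain ⟨b, hbC2, hbC1⟩ := hb
  obtain ⟨hC1X, hP1⟩ := h1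
  obtain ⟨hC2X, hP2⟩ := h2
  -- relPerp a x b  (a, x ∈ C₁, b ∈ X \ C₁)
  have hAXB := hP1 a haC1 x hx1 b ⟨hC2X hbC2, hbC1⟩
  -- relPerp b x a  (b, x ∈ C₂, a ∈ X \ C₂)
  have hBXA := hP2 b hbC2 x hx2 a ⟨hC1X haC1, haC2⟩
  obtain ⟨hcaab, hcaxb, hkey1⟩ := hAXB
  obtain ⟨hcaba, hcaxa, hkey2⟩ := hBXA
  obtain ⟨v, hv⟩ := exists_mrca E hacyc hcaab      -- v ∈ mrca a b
  obtain ⟨v', hv'⟩ := exists_mrca E hacyc hcaxb    -- v' ∈ mrca x b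
  obtain ⟨u, hu, u', hu', hvu, hv'u'⟩ := hkey1 v hv v' hv'  -- u' ∈ mrca a x, v' ≺ u'
  have hv2 : v ∈ mrca E b a := by rw [mrca_comm]; exact hv
  have hu'2 : u' ∈ mrca E x a := by rw [mrca_comm]; exact hu'
  obtain ⟨w, hw, w', hw', hvw, hu'w'⟩ := hkey2 v hv2 u' hu'2  -- w' ∈ mrca b x, u' ≺ w'
  have hw'2 : w' ∈ mrca E x b := by rw [mrca_comm]; exact hw'
  -- v' ≺ u' ≺ w', both v', w' ∈ mrca x b : contradicts maximality of v'
  have hlt : precLT E v' w' := precLT_trans' hacyc hv'u' hu'w'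
  exact hlt.2 (hv'.2 w' hw'2.1 hlt.1)
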